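/- Let X, Y be Polish spaces with Borel probability measures μ, ν and c : X × Y → [0,∞] Borel measurable. Let π, π₀ ∈ Π(μ,ν) have finite cost, and let Γ ⊆ X × Y be a Borel set with π(Γ) = 1 on which c is finite. Let I = {0,…,n} or ℕ, let (Cᵢ)_{i∈I} be pairwise disjoint Borel subsets of X and (Dᵢ)_{i∈I} pairwise disjoint Borel subsets of Y, such that the equivalence classes of the relation ≈_{c,Γ} are exactly the sets Γ ∩ (Cᵢ × Dᵢ). Then π₀(⋃_{i∈I} Cᵢ × Dᵢ) = 1. -/

import Mathlib

open MeasureTheory Set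
open scoped ENNReal

noncomputable section

def IsCoupling {X Y : Type*} [MeasurableSpace X] [MeasurableSpace Y]
    (μ : Measure X) (ν : Measure Y) (π : Measure (X × Y)) : Prop :=
  π.map Prod.fst = μ ∧ π.map Prod.snd = ν

def CMonotoneSet {X Y : Type*} (c : X × Y → ℝ≥0∞) (Γ : Set (X × Y)) : Prop :=
  ∀ (n : ℕ) (f : Fin (n + 1) → X × Y), (∀ i, f i ∈ Γ) →
    ∑ i, c (f i) ≤ ∑ i, c ((f i).1, (f (i + 1)).2)

def ChainLe {X Y : Type*} (c : X × Y → ℝ≥0∞) (Γ : Set (X × Y)) (p q : X × Y) : Prop :=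
  ∃ (n : ℕ) (g : Fin (n + 1) → X × Y), (∀ i, g i ∈ Γ) ∧ g 0 = p ∧ g (Fin.last n) = q ∧
    ∀ i : Fin n, c ((g i.succ).1, (g i.castSucc).2) < ⊤

def ChainEquiv {X Y : Type*} (c : X × Y → ℝ≥0∞) (Γ : Set (X × Y)) (p q : X × Y) : Prop :=
  ChainLe c Γ p q ∧ ChainLe c Γ q p

def Connecting {X Y : Type*} (c : X × Y → ℝ≥0∞) (Γ : Set (X × Y)) : Prop :=
  (∀ p ∈ Γ, c p < ⊤) ∧ ∀ p ∈ Γ, ∀ q ∈ Γ, ChainEquiv c Γ p q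

section Chains

variable {X Y : Type*} {c : X × Y → ℝ≥0∞} {Γ : Set (X × Y)} {p q r : X × Y}

lemma chainLe_iff_nat : ChainLe c Γ p q ↔ ∃ (n : ℕ) (g : ℕ → X × Y),
    (∀ i ≤ n, g i ∈ Γ) ∧ g 0 = p ∧ g n = q ∧ ∀ i < n, c ((g (i + 1)).1, (g i).2) < ⊤ := by
  constructor
  · rintro ⟨n, g, hmem, h0, hn, hlink⟩
    refine ⟨n, fun k => g ⟨min k n, by omega⟩, fun i hi => hmem _, ?_, ?_, ?_⟩
    · simpa using h0
    · simpa [Fin.last] using hn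
    · intro i hi
      have := hlink ⟨i, hi⟩
      simp only [Fin.succ, Fin.castSucc, Fin.castAdd, Fin.castLE] at this
      have h1 : min (i + 1) n = i + 1 := by omega
      have h2 : min i n = i := by omega
      simpa [h1, h2] using this
  · rintro ⟨n, g, hmem, h0, hn, hlink⟩
    refine ⟨n, fun i => g i.val, fun i => hmem _ (by omega), by simpa using h0,
      by simpa [Fin.last] using hn, fun i => ?_⟩
    have := hlink i.val i.isLt
    simpa using this

lemma ChainLe.mem_left (h : ChainLe c Γ p q) : p ∈ Γ := by
  obtain ⟨n, g, hmem, h0, -, -⟩ := h; exact h0 ▸ hmem 0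

lemma ChainLe.mem_right (h : ChainLe c Γ p q) : q ∈ Γ := by
  obtain ⟨n, g, hmem, -, hn, -⟩ := h; exact hn ▸ hmem _

lemma chainLe_refl (hp : p ∈ Γ) : ChainLe c Γ p p :=
  ⟨0, fun _ => p, fun _ => hp, rfl, rfl, fun i => i.elim0⟩

lemma ChainLe.trans (h1 : ChainLe c Γ p q) (h2 : ChainLe c Γ q r) : ChainLe c Γ p r := by
  rw [chainLe_iff_nat] at h1 h2 ⊢
  obtain ⟨n, g, hgmem, hg0, hgn, hglink⟩ := h1
  obtain ⟨m, h, hhmem, hh0, hhm, hhlink⟩ := h2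
  refine ⟨n + m, fun k => if k ≤ n then g k else h (k - n), ?_, ?_, ?_, ?_⟩
  · intro i hi
    by_cases hin : i ≤ n
    · simp [hin, hgmem i hin]
    · simp only [hin, if_false]
      exact hhmem _ (by omega)
  · simp [hg0]
  · by_cases hm : m = 0
    · subst hm
      simp [hgn, ← hh0, hhm]
    · have : ¬ (n + m ≤ n) := by omega
      simp [this, hhm]
  · intro i hi
    rcases lt_trichotomy i n with hlt | heq | hgt
    · have h1 : i + 1 ≤ n := by omega
      have h2 : i ≤ n := by omega
      simpa [h1, h2] using hglink i hlt
    · subst heq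
      have hm : 0 < m := by omega
      have h1 : ¬ (i + 1 ≤ i) := by omega
      simp only [h1, if_false, le_refl, if_true, Nat.add_sub_cancel_left]
      have := hhlink 0 hm
      simpa [hh0, ← hgn] using this
    · have h1 : ¬ (i + 1 ≤ n) := by omega
      have h2 : ¬ (i ≤ n) := by omega
      have h3 : i + 1 - n = (i - n) + 1 := by omega
      simp only [h1, h2, if_false, h3]
      exact hhlink (i - n) (by omega)

lemma chainLe_single (hp : p ∈ Γ) (hq : q ∈ Γ) (hc : c (q.1, p.2) < ⊤) : ChainLe c Γ p q := by
  rw [chainLe_iff_nat]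
  refine ⟨1, fun k => if k = 0 then p else q, ?_, by simp, by simp, ?_⟩
  · intro i hi; by_cases h : i = 0 <;> simp [h, hp, hq]
  · intro i hi
    have : i = 0 := by omega
    subst this
    simpa using hc

lemma chainEquiv_refl (hp : p ∈ Γ) : ChainEquiv c Γ p p := ⟨chainLe_refl hp, chainLe_refl hp⟩

end Chains

lemma ae_exists_fiber {A B : Type*} [MeasurableSpace A]
    [MeasurableSpace B] [StandardBorelSpace B] [Nonempty B]
    (ρ : Measure (A × B)) [IsProbabilityMeasure ρ] (S : Set (A × B)) (hS : MeasurableSet S)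
    (hS1 : ρ S = 1) :
    ∃ E : Set A, MeasurableSet E ∧ ρ.fst E = 1 ∧ ∀ x ∈ E, ∃ y, (x, y) ∈ S := by
  set κ := ρ.condKernel
  set f : A → ℝ≥0∞ := fun x => κ x (Prod.mk x ⁻¹' S) with hf
  have hfm : Measurable f := ProbabilityTheory.Kernel.measurable_kernel_prodMk_left hS
  have hint : ∫⁻ x, f x ∂ρ.fst = 1 := by
    rw [hf]
    have := ρ.disintegrate κ
    conv_rhs => rw [← hS1, ← this]
    rw [Measure.compProd_apply hS]
  have hfle : ∀ x, f x ≤ 1 := fun x => prob_le_one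
  refine ⟨{x | f x ≠ 0}, (hfm (measurableSet_singleton 0)).compl, ?_, ?_⟩
  · have hfst : IsProbabilityMeasure ρ.fst := by
      constructor
      rw [Measure.fst_univ, measure_univ]
    have hsub : ∫⁻ x, (1 - f x) ∂ρ.fst = 0 := by
      rw [lintegral_sub hfm (by simp [hint]) (Filter.Eventually.of_forall hfle)]
      simp [hint]
    have h0 : ∀ᵐ x ∂ρ.fst, 1 - f x = 0 :=
      (lintegral_eq_zero_iff ((measurable_const.sub hfm))).1 hsub
    have h1 : ∀ᵐ x ∂ρ.fst, f x ≠ 0 := by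
      filter_upwards [h0] with x hx
      intro hx0
      rw [hx0] at hx
      simp at hx
    have := prob_compl_eq_zero_iff (μ := ρ.fst) (s := {x | f x ≠ 0})
      ((hfm (measurableSet_singleton 0)).compl)
    rw [← this]
    have hset : {x | f x ≠ 0}ᶜ = {a | f a = 0} := by ext a; simp
    rw [hset]
    simpa [ae_iff] using h1
  · intro x hx
    by_contra hne
    push_neg at hne
    have : Prod.mk x ⁻¹' S = ∅ := by
      ext y; simp [hne y]
    exact hx (by simp [f, this])

theorem second_plan_concentrated_on_classes
    {X Y : Type*} [MeasurableSpace X] [TopologicalSpace X] [PolishSpace X] [BorelSpace X]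
    [MeasurableSpace Y] [TopologicalSpace Y] [PolishSpace Y] [BorelSpace Y]
    (μ : Measure X) (ν : Measure Y) [IsProbabilityMeasure μ] [IsProbabilityMeasure ν]
    (c : X × Y → ℝ≥0∞) (hc : Measurable c)
    (π π₀ : Measure (X × Y)) (hπ : IsCoupling μ ν π) (hπ₀ : IsCoupling μ ν π₀)
    (hπfin : ∫⁻ p, c p ∂π ≠ ⊤) (hπ₀fin : ∫⁻ p, c p ∂π₀ ≠ ⊤)
    (Γ : Set (X × Y)) (hΓm : MeasurableSet Γ) (hΓ1 : π Γ = 1)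
    (hΓfin : ∀ p ∈ Γ, c p < ⊤)
    {I : Type*} [Countable I]
    (C : I → Set X) (D : I → Set Y)
    (hCm : ∀ i, MeasurableSet (C i)) (hDm : ∀ i, MeasurableSet (D i))
    (hCd : ∀ i j, i ≠ j → Disjoint (C i) (C j))
    (hDd : ∀ i j, i ≠ j → Disjoint (D i) (D j))
    (hclass : ∀ p ∈ Γ, ∃ i, {q ∈ Γ | ChainEquiv c Γ p q} = Γ ∩ (C i) ×ˢ (D i))
    (hclass' : ∀ i, ∃ p ∈ Γ, {q ∈ Γ | ChainEquiv c Γ p q} = Γ ∩ (C i) ×ˢ (D i)) :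
    π₀ (⋃ i, (C i) ×ˢ (D i)) = 1 := by
  classical
  -- nonemptiness
  haveI hYne : Nonempty Y := by
    obtain ⟨y, -⟩ := nonempty_of_measure_ne_zero (μ := ν) (s := univ) (by simp)
    exact ⟨y⟩
  haveI hXne : Nonempty X := by
    obtain ⟨x, -⟩ := nonempty_of_measure_ne_zero (μ := μ) (s := univ) (by simp)
    exact ⟨x⟩
  -- probability instances
  haveI hπprob : IsProbabilityMeasure π := by
    constructor
    have : π.map Prod.fst univ = π univ := by
      rw [Measure.map_apply measurable_fst MeasurableSet.univ]; simp
    rw [← this, hπ.1, measure_univ]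
  haveI hπ₀prob : IsProbabilityMeasure π₀ := by
    constructor
    have : π₀.map Prod.fst univ = π₀ univ := by
      rw [Measure.map_apply measurable_fst MeasurableSet.univ]; simp
    rw [← this, hπ₀.1, measure_univ]
  -- marginal application lemmas
  have hfstπ : ∀ s : Set X, MeasurableSet s → π (Prod.fst ⁻¹' s) = μ s := by
    intro s hs; rw [← hπ.1, Measure.map_apply measurable_fst hs]
  have hsndπ : ∀ s : Set Y, MeasurableSet s → π (Prod.snd ⁻¹' s) = ν s := by
    intro s hs; rw [← hπ.2, Measure.map_apply measurable_snd hs]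
  have hfstπ₀ : ∀ s : Set X, MeasurableSet s → π₀ (Prod.fst ⁻¹' s) = μ s := by
    intro s hs; rw [← hπ₀.1, Measure.map_apply measurable_fst hs]
  have hsndπ₀ : ∀ s : Set Y, MeasurableSet s → π₀ (Prod.snd ⁻¹' s) = ν s := by
    intro s hs; rw [← hπ₀.2, Measure.map_apply measurable_snd hs]
  have MC : MeasurableSet (⋃ i, C i) := MeasurableSet.iUnion hCm
  have MD : MeasurableSet (⋃ i, D i) := MeasurableSet.iUnion hDm
  -- representatives of classes
  choose p hpΓ hpclass using hclass'
  have hmemiff : ∀ i q, q ∈ Γ ∩ (C i) ×ˢ (D i) ↔ q ∈ Γ ∧ ChainEquiv c Γ (p i) q := by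
    intro i q; rw [← hpclass i]; exact mem_sep_iff
  have hpCD : ∀ i, p i ∈ (C i) ×ˢ (D i) :=
    fun i => ((hmemiff i (p i)).2 ⟨hpΓ i, chainEquiv_refl (hpΓ i)⟩).2
  have hΓsub : Γ ⊆ ⋃ i, (C i) ×ˢ (D i) := by
    intro q hq
    obtain ⟨i, hi⟩ := hclass q hq
    have hq2 : q ∈ Γ ∩ (C i) ×ˢ (D i) := by
      rw [← hi]; exact ⟨hq, chainEquiv_refl hq⟩
    exact mem_iUnion.2 ⟨i, hq2.2⟩
  have huniqC : ∀ q ∈ Γ, ∀ i, q.1 ∈ C i → q ∈ (C i) ×ˢ (D i) := by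
    intro q hq i h1
    obtain ⟨j, hj⟩ := mem_iUnion.1 (hΓsub hq)
    rcases eq_or_ne j i with rfl | hne
    · exact hj
    · exact (((hCd j i hne).ne_of_mem hj.1 h1) rfl).elim
  have huniqD : ∀ q ∈ Γ, ∀ i, q.2 ∈ D i → q ∈ (C i) ×ˢ (D i) := by
    intro q hq i h1
    obtain ⟨j, hj⟩ := mem_iUnion.1 (hΓsub hq)
    rcases eq_or_ne j i with rfl | hne
    · exact hj
    · exact (((hDd j i hne).ne_of_mem hj.2 h1) rfl).elim
  have hclassmemC : ∀ q ∈ Γ, ∀ i, q.1 ∈ C i → ChainEquiv c Γ (p i) q :=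
    fun q hq i h1 => ((hmemiff i q).1 ⟨hq, huniqC q hq i h1⟩).2
  have hclassmemD : ∀ q ∈ Γ, ∀ i, q.2 ∈ D i → ChainEquiv c Γ (p i) q :=
    fun q hq i h1 => ((hmemiff i q).1 ⟨hq, huniqD q hq i h1⟩).2
  -- the preorder on indices and its antisymmetry
  have ord_antisymm : ∀ i j, ChainLe c Γ (p i) (p j) → ChainLe c Γ (p j) (p i) → i = j := by
    intro i j h1 h2
    have hpj : p j ∈ Γ ∩ (C i) ×ˢ (D i) := (hmemiff i (p j)).2 ⟨hpΓ j, h1, h2⟩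
    rcases eq_or_ne i j with h | hne
    · exact h
    · exact (((hCd i j hne).ne_of_mem hpj.2.1 (hpCD j).1) rfl).elim
  -- full-measure projections
  have hμC : μ (⋃ i, C i) = 1 := by
    refine le_antisymm prob_le_one ?_
    rw [← hΓ1, ← hfstπ _ MC]
    refine measure_mono fun q hq => ?_
    obtain ⟨i, hi⟩ := mem_iUnion.1 (hΓsub hq)
    exact mem_preimage.2 (mem_iUnion.2 ⟨i, hi.1⟩)
  have hνD : ν (⋃ i, D i) = 1 := by
    refine le_antisymm prob_le_one ?_
    rw [← hΓ1, ← hsndπ _ MD]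
    refine measure_mono fun q hq => ?_
    obtain ⟨i, hi⟩ := mem_iUnion.1 (hΓsub hq)
    exact mem_preimage.2 (mem_iUnion.2 ⟨i, hi.2⟩)
  have hπΓc : π Γᶜ = 0 := (prob_compl_eq_zero_iff hΓm).2 hΓ1
  -- masses of classes agree on both sides
  have mCD : ∀ i, μ (C i) = ν (D i) := by
    intro i
    have h1 : Prod.fst ⁻¹' (C i) ∩ Γ = Γ ∩ (C i) ×ˢ (D i) := by
      ext q
      constructor
      · rintro ⟨h1, h2⟩; exact ⟨h2, huniqC q h2 i h1⟩
      · rintro ⟨h1, h2⟩; exact ⟨h2.1, h1⟩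
    have h2 : Prod.snd ⁻¹' (D i) ∩ Γ = Γ ∩ (C i) ×ˢ (D i) := by
      ext q
      constructor
      · rintro ⟨h1, h2⟩; exact ⟨h2, huniqD q h2 i h1⟩
      · rintro ⟨h1, h2⟩; exact ⟨h2.2, h1⟩
    calc μ (C i) = π (Prod.fst ⁻¹' (C i)) := (hfstπ _ (hCm i)).symm
    _ = π (Prod.fst ⁻¹' (C i) ∩ Γ) := (measure_inter_conull hπΓc).symm
    _ = π (Prod.snd ⁻¹' (D i) ∩ Γ) := by rw [h1, h2]
    _ = π (Prod.snd ⁻¹' (D i)) := measure_inter_conull hπΓc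
    _ = ν (D i) := hsndπ _ (hDm i)
  -- conull preimages for π₀
  have hπ₀C : π₀ (Prod.fst ⁻¹' (⋃ i, C i))ᶜ = 0 := by
    rw [← preimage_compl, hfstπ₀ _ MC.compl]
    exact (prob_compl_eq_zero_iff MC).2 hμC
  have hπ₀D : π₀ (Prod.snd ⁻¹' (⋃ i, D i))ᶜ = 0 := by
    rw [← preimage_compl, hsndπ₀ _ MD.compl]
    exact (prob_compl_eq_zero_iff MD).2 hνD
  -- the matrix of masses
  set a : I → I → ℝ≥0∞ := fun i j => π₀ ((C i) ×ˢ (D j)) with ha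
  have row : ∀ i, ∑' j, a i j = μ (C i) := by
    intro i
    have hdisj : Pairwise (Function.onFun Disjoint fun j => (C i) ×ˢ (D j)) := by
      intro j k hne
      rw [Function.onFun, Set.disjoint_left]
      rintro q ⟨-, h1⟩ ⟨-, h2⟩
      exact (Set.disjoint_left.1 (hDd j k hne)) h1 h2
    rw [ha]
    rw [← measure_iUnion hdisj fun j => (hCm i).prod (hDm j)]
    have : (⋃ j, (C i) ×ˢ (D j)) = Prod.fst ⁻¹' (C i) ∩ Prod.snd ⁻¹' (⋃ j, D j) := by
      ext q; simp [Set.mem_prod, and_comm]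
    rw [this, measure_inter_conull hπ₀D, hfstπ₀ _ (hCm i)]
  have col : ∀ j, ∑' i, a i j = ν (D j) := by
    intro j
    have hdisj : Pairwise (Function.onFun Disjoint fun i => (C i) ×ˢ (D j)) := by
      intro i k hne
      rw [Function.onFun, Set.disjoint_left]
      rintro q ⟨h1, -⟩ ⟨h2, -⟩
      exact (Set.disjoint_left.1 (hCd i k hne)) h1 h2
    rw [ha]
    rw [← measure_iUnion hdisj fun i => (hCm i).prod (hDm j)]
    have : (⋃ i, (C i) ×ˢ (D j)) = Prod.snd ⁻¹' (D j) ∩ Prod.fst ⁻¹' (⋃ i, C i) := by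
      ext q; simp [Set.mem_prod, and_comm]
    rw [this, measure_inter_conull hπ₀C, hsndπ₀ _ (hDm j)]
  -- fibers exist a.e.
  obtain ⟨E₁, hE₁m, hE₁1, hE₁⟩ := ae_exists_fiber π Γ hΓm hΓ1
  have hE₁μ : μ E₁ = 1 := by
    rw [← hfstπ _ hE₁m, ← Measure.fst_apply hE₁m]; exact hE₁1
  haveI : IsProbabilityMeasure (π.map Prod.swap) :=
    Measure.isProbabilityMeasure_map measurable_swap.aemeasurable
  have hswapm : MeasurableSet (Prod.swap ⁻¹' Γ : Set (Y × X)) := measurable_swap hΓm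
  obtain ⟨E₂, hE₂m, hE₂1, hE₂⟩ := ae_exists_fiber (π.map Prod.swap) (Prod.swap ⁻¹' Γ) hswapm
    (by
      rw [Measure.map_apply measurable_swap hswapm]
      have : Prod.swap ⁻¹' (Prod.swap ⁻¹' Γ : Set (Y × X)) = Γ := by ext q; simp
      rw [this, hΓ1])
  have hE₂ν : ν E₂ = 1 := by
    have hmap : (π.map Prod.swap).fst = ν := by
      rw [Measure.fst, Measure.map_map measurable_fst measurable_swap]
      have : (Prod.fst ∘ Prod.swap : X × Y → Y) = Prod.snd := by funext q; rfl
      rw [this, hπ.2]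
    rw [← hmap]; exact hE₂1
  have hE₂' : ∀ y ∈ E₂, ∃ x, (x, y) ∈ Γ := by
    intro y hy
    obtain ⟨x, hx⟩ := hE₂ y hy
    exact ⟨x, hx⟩
  -- null sets for π₀
  have hN1 : π₀ {q | ¬ c q < ⊤} = 0 := by
    have := ae_lt_top hc hπ₀fin
    simpa [ae_iff] using this
  have hN2 : π₀ (Prod.fst ⁻¹' E₁)ᶜ = 0 := by
    rw [← preimage_compl, hfstπ₀ _ hE₁m.compl]
    exact (prob_compl_eq_zero_iff hE₁m).2 hE₁μ
  have hN3 : π₀ (Prod.snd ⁻¹' E₂)ᶜ = 0 := by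
    rw [← preimage_compl, hsndπ₀ _ hE₂m.compl]
    exact (prob_compl_eq_zero_iff hE₂m).2 hE₂ν
  -- key crossing lemma
  have key : ∀ i j, a i j ≠ 0 → ChainLe c Γ (p j) (p i) := by
    intro i j hne
    have hnull : π₀ ({q | ¬ c q < ⊤} ∪ ((Prod.fst ⁻¹' E₁)ᶜ ∪ (Prod.snd ⁻¹' E₂)ᶜ)) = 0 :=
      measure_union_null hN1 (measure_union_null hN2 hN3)
    have hS : π₀ ((C i) ×ˢ (D j) \
        ({q | ¬ c q < ⊤} ∪ ((Prod.fst ⁻¹' E₁)ᶜ ∪ (Prod.snd ⁻¹' E₂)ᶜ))) ≠ 0 := by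
      rw [measure_diff_null hnull]; exact hne
    obtain ⟨q, hqCD, hqN⟩ := nonempty_of_measure_ne_zero hS
    simp only [mem_union, not_or, mem_setOf_eq, mem_compl_iff, mem_preimage, not_not,
      not_lt, not_le] at hqN
    obtain ⟨hqc, hqE₁, hqE₂⟩ := hqN
    obtain ⟨y₁, hy₁⟩ := hE₁ q.1 hqE₁
    obtain ⟨x₁, hx₁⟩ := hE₂' q.2 hqE₂
    have h1 : ChainEquiv c Γ (p i) (q.1, y₁) := hclassmemC _ hy₁ i hqCD.1
    have h2 : ChainEquiv c Γ (p j) (x₁, q.2) := hclassmemD _ hx₁ j hqCD.2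
    have hstep : ChainLe c Γ (x₁, q.2) (q.1, y₁) :=
      chainLe_single hx₁ hy₁ (by simpa using hqc)
    exact (h2.1.trans hstep).trans h1.2
  -- off-diagonal terms vanish
  have tsub : ∀ (f : I → ℝ≥0∞) (S : Set I), ∑' i : S, f i ≤ ∑' i, f i := by
    intro f S
    rw [← Summable.tsum_add_tsum_compl (s := S) ENNReal.summable ENNReal.summable]
    exact le_self_add
  have hCdisj : Pairwise (Function.onFun Disjoint C) := fun i j h => hCd i j h
  have hsumC : ∑' i, μ (C i) = 1 := by
    rw [← measure_iUnion hCdisj hCm, hμC]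
  have offdiag : ∀ i j, i ≠ j → a i j = 0 := by
    intro i₀ j₀ hne
    by_contra hne0
    have hji : ChainLe c Γ (p j₀) (p i₀) := key i₀ j₀ hne0
    have hnij : ¬ ChainLe c Γ (p i₀) (p j₀) := fun h => hne (ord_antisymm i₀ j₀ h hji)
    set U : Set I := {k | ChainLe c Γ (p j₀) (p k) ∧ ¬ ChainLe c Γ (p k) (p j₀)} with hU
    have hi₀ : i₀ ∈ U := ⟨hji, hnij⟩
    have hj₀ : j₀ ∉ U := fun h => h.2 (chainLe_refl (hpΓ j₀))
    have hclosed : ∀ k ∈ U, ∀ i, a i k ≠ 0 → i ∈ U := by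
      intro k hk i h
      have hki : ChainLe c Γ (p k) (p i) := key i k h
      exact ⟨hk.1.trans hki, fun hij₀ => hk.2 (hki.trans hij₀)⟩
    -- column sums over U
    have hcolU : ∀ k : U, ν (D k) = ∑' i : U, a i k := by
      intro k
      rw [← col k]
      rw [← Summable.tsum_add_tsum_compl (s := U) ENNReal.summable ENNReal.summable]
      have hz : ∑' i : ↥Uᶜ, a i k = 0 := by
        rw [ENNReal.tsum_eq_zero]
        intro i
        by_contra h
        exact i.2 (hclosed k k.2 i h)
      rw [hz, add_zero]
    set L : ℝ≥0∞ := ∑' i : U, ∑' k : U, a i k with hL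
    set R : ℝ≥0∞ := ∑' i : U, ∑' k : ↥Uᶜ, a (i : I) k with hR
    have hrowU : ∀ i : U, μ (C i) = ∑' k : U, a i k + ∑' k : ↥Uᶜ, a (i : I) k := by
      intro i
      rw [Summable.tsum_add_tsum_compl (s := U) ENNReal.summable ENNReal.summable, row]
    have hLfin : L ≠ ⊤ := by
      have h1 : L ≤ ∑' i : U, μ (C i) := by
        refine ENNReal.tsum_le_tsum fun i => ?_
        rw [hrowU i]
        exact le_self_add
      have h2 : (∑' i : U, μ (C i)) ≤ 1 := by
        rw [← hsumC]; exact tsub _ _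
      exact ((h1.trans h2).trans_lt ENNReal.one_lt_top).ne
    have hsum2 : ∑' i : U, μ (C i) = L + R := by
      rw [hL, hR, ← ENNReal.tsum_add]
      exact tsum_congr fun i => hrowU i
    have hsum1 : ∑' k : U, ν (D k) = L := by
      rw [hL, ENNReal.tsum_comm]
      exact tsum_congr fun k => hcolU k
    have hLL : L + R = L := by
      rw [← hsum2, ← hsum1]
      exact tsum_congr fun i => (mCD i).symm ▸ rfl
    have hR0 : R = 0 := by
      have : L + R = L + 0 := by rw [hLL, add_zero]
      exact (ENNReal.add_right_inj hLfin).1 this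
    have : a i₀ j₀ ≤ R := by
      calc a i₀ j₀ ≤ ∑' k : ↥Uᶜ, a i₀ k := ENNReal.le_tsum (⟨j₀, hj₀⟩ : ↥Uᶜ)
      _ ≤ R := by
        rw [hR]
        exact ENNReal.le_tsum (⟨i₀, hi₀⟩ : U)
    exact hne0 (le_antisymm (this.trans hR0.le) zero_le)
  -- conclusion
  have hU2 : π₀ (⋃ i, ⋃ j, (C i) ×ˢ (D j)) = 1 := by
    have hset : (⋃ i, ⋃ j, (C i) ×ˢ (D j)) =
        Prod.fst ⁻¹' (⋃ i, C i) ∩ Prod.snd ⁻¹' (⋃ j, D j) := by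
      ext q; simp [Set.mem_prod]
    rw [hset, measure_inter_conull hπ₀D, hfstπ₀ _ MC, hμC]
  have hdiff : π₀ ((⋃ i, ⋃ j, (C i) ×ˢ (D j)) \ (⋃ i, (C i) ×ˢ (D i))) = 0 := by
    refine measure_mono_null (fun q hq => ?_)
      (measure_iUnion_null (s := fun ij : I × I =>
        ⋃ _ : ij.1 ≠ ij.2, (C ij.1) ×ˢ (D ij.2)) fun ij =>
          measure_iUnion_null fun hne => offdiag _ _ hne)
    obtain ⟨hq2, hq1⟩ := hq
    obtain ⟨i, hi⟩ := mem_iUnion.1 hq2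
    obtain ⟨j, hj⟩ := mem_iUnion.1 hi
    have hij : i ≠ j := by
      rintro rfl
      exact hq1 (mem_iUnion.2 ⟨i, hj⟩)
    exact mem_iUnion.2 ⟨(i, j), mem_iUnion.2 ⟨hij, hj⟩⟩
  refine le_antisymm prob_le_one ?_
  calc (1 : ℝ≥0∞) = π₀ (⋃ i, ⋃ j, (C i) ×ˢ (D j)) := hU2.symm
  _ ≤ π₀ ((⋃ i, (C i) ×ˢ (D i)) ∪ ((⋃ i, ⋃ j, (C i) ×ˢ (D j)) \ (⋃ i, (C i) ×ˢ (D i)))) := by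
      refine measure_mono fun q hq => ?_
      by_cases h : q ∈ ⋃ i, (C i) ×ˢ (D i)
      · exact Or.inl h
      · exact Or.inr ⟨hq, h⟩
  _ ≤ π₀ (⋃ i, (C i) ×ˢ (D i)) + π₀ ((⋃ i, ⋃ j, (C i) ×ˢ (D j)) \ (⋃ i, (C i) ×ˢ (D i))) :=
      measure_union_le _ _
  _ = π₀ (⋃ i, (C i) ×ˢ (D i)) := by rw [hdiff, add_zero]
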